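/- Let N ≥ 3 be an odd integer and l an integer with 1 ≤ l ≤ (N+1)/2. Then Σ_{n=1}^{N-1} ( sin(n(2l−1)π/N) / sin(nπ/N) ) · ( sin(2n(2l−1)π/N) / sin(2nπ/N) ) = −(1/2)(3l−2)(3l−3) + (1/2)(l−1)(l−2) − l + (1/2)(1−(−1)^l) + ((N−1)/2)·( 2l−1−(−1)^l ) + ε, where ε = N·( 3l−2−N + (1/2)(1−(−1)^{l−N}) ) if 3l−2 > N, and ε = 0 otherwise. -/

import Mathlib

open Real Finset

namespace F1aux
open Complex

set_option maxHeartbeats 1000000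

theorem dirichlet_kernel (θ : ℝ) (h : Real.sin θ ≠ 0) (m : ℕ) :
    ((Real.sin (m * θ) / Real.sin θ : ℝ) : ℂ)
      = ∑ k ∈ range m, Complex.exp (θ * Complex.I) ^ (2 * (k:ℤ) - m + 1) := by
  set x := Complex.exp (θ * Complex.I) with hxdef
  have hx : x ≠ 0 := Complex.exp_ne_zero _
  have hw : x ^ m ≠ 0 := pow_ne_zero _ hx
  have hsinθ : Complex.sin θ = (x⁻¹ - x) * Complex.I / 2 := by
    rw [Complex.sin, hxdef, ← Complex.exp_neg]
    ring_nf
  have hsinm : Complex.sin (m * θ) = ((x ^ m)⁻¹ - x ^ m) * Complex.I / 2 := by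
    rw [Complex.sin]
    have h1 : -((m : ℂ) * θ) * Complex.I = (((-(m:ℤ)) : ℤ) : ℂ) * ((θ:ℂ) * Complex.I) := by
      push_cast; ring
    have h2 : ((m : ℂ) * θ) * Complex.I = (((m:ℤ) : ℤ) : ℂ) * ((θ:ℂ) * Complex.I) := by
      push_cast; ring
    rw [h1, h2, Complex.exp_int_mul, Complex.exp_int_mul, ← hxdef]
    rw [zpow_neg, zpow_natCast]
  have hsc : Complex.sin θ ≠ 0 := by
    rw [← Complex.ofReal_sin]
    exact_mod_cast h
  have hterm : ∀ k : ℕ, x ^ (2 * (k:ℤ) - m + 1) = x * (x ^ m)⁻¹ * (x ^ 2) ^ k := by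
    intro k
    rw [show (2 * (k:ℤ) - m + 1) = ((2*k : ℕ):ℤ) + (1 - (m:ℤ)) by push_cast; ring,
      zpow_add₀ hx, zpow_natCast, zpow_sub₀ hx, zpow_one, zpow_natCast, pow_mul]
    ring
  have hgeom : (∑ k ∈ range m, (x^2) ^ k) * (x^2 - 1) = (x^m)^2 - 1 := by
    rw [geom_sum_mul, ← pow_mul, mul_comm 2 m, pow_mul]
  rw [Complex.ofReal_div, Complex.ofReal_sin, Complex.ofReal_sin, Complex.ofReal_mul,
    Complex.ofReal_natCast, hsinm]
  rw [Finset.sum_congr rfl (fun k _ => hterm k), ← Finset.mul_sum]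
  rw [div_eq_iff hsc, hsinθ]
  apply mul_right_cancel₀ (show (x * x^m * 2:ℂ) ≠ 0 from
    mul_ne_zero (mul_ne_zero hx hw) two_ne_zero)
  generalize hS : ∑ k ∈ range m, (x^2)^k = S at hgeom ⊢
  field_simp
  linear_combination hgeom

theorem root_sum (N : ℕ) (hN : N ≠ 0) (c : ℤ) :
    ∑ n ∈ range N, Complex.exp (2 * Real.pi * Complex.I / N) ^ ((n : ℤ) * c)
      = if (N:ℤ) ∣ c then (N:ℂ) else 0 := by
  set ω := Complex.exp (2 * Real.pi * Complex.I / N) with hω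
  have hprim : IsPrimitiveRoot ω N := Complex.isPrimitiveRoot_exp N hN
  have hone : ω ^ (N:ℤ) = 1 := by
    rw [zpow_natCast]; exact hprim.pow_eq_one
  have hsum : ∀ n : ℕ, ω ^ ((n:ℤ) * c) = (ω ^ c) ^ n := by
    intro n
    rw [mul_comm, zpow_mul, zpow_natCast]
  rw [Finset.sum_congr rfl (fun n _ => hsum n)]
  by_cases hdvd : (N:ℤ) ∣ c
  · rw [if_pos hdvd, (hprim.zpow_eq_one_iff_dvd c).mpr hdvd]
    simp
  · rw [if_neg hdvd]
    have hne : ω ^ c ≠ 1 := fun h => hdvd ((hprim.zpow_eq_one_iff_dvd c).mp h)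
    rw [geom_sum_eq hne]
    have : (ω ^ c) ^ N = 1 := by
      rw [← zpow_natCast, ← zpow_mul, mul_comm, zpow_mul, hone, one_zpow]
    rw [this]
    simp

theorem count_generic (m a : ℕ) :
    (∑ j ∈ range m, ∑ k ∈ range m, (if j + 2*k + 3 = a then (1:ℂ) else 0))
      = ((filter (fun k => 2*k+3 ≤ a ∧ a - (2*k+3) < m) (range m)).card : ℂ) := by
  rw [Finset.sum_comm]
  have inner : ∀ k : ℕ, (∑ j ∈ range m, (if j + 2*k + 3 = a then (1:ℂ) else 0))
      = (if 2*k+3 ≤ a ∧ a - (2*k+3) < m then (1:ℂ) else 0) := by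
    intro k
    by_cases hA : 2*k+3 ≤ a
    · have hcong : ∀ j ∈ range m, (if j + 2*k + 3 = a then (1:ℂ) else 0)
          = (if j = a - (2*k+3) then (1:ℂ) else 0) := by
        intro j _
        exact if_congr (by omega) rfl rfl
      rw [Finset.sum_congr rfl hcong, Finset.sum_ite_eq' (range m) (a - (2*k+3)) (fun _ => (1:ℂ))]
      simp only [Finset.mem_range, hA, true_and]
    · have hcong : ∀ j ∈ range m, (if j + 2*k + 3 = a then (1:ℂ) else 0) = 0 := by
        intro j _
        rw [if_neg (by omega)]
      rw [Finset.sum_congr rfl hcong, Finset.sum_const, smul_zero, if_neg (by omega)]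
  rw [Finset.sum_congr rfl (fun k _ => inner k), Finset.sum_boole]

theorem termwise (N l : ℕ) (hN : 3 ≤ N) (hNodd : Odd N) (hl1 : 1 ≤ l)
    (n : ℕ) (hn : n ∈ Finset.Icc 1 (N - 1)) :
    ((Real.sin (n * (2 * l - 1 : ℝ) * Real.pi / N) / Real.sin (n * Real.pi / N)) *
        (Real.sin (2 * n * (2 * l - 1 : ℝ) * Real.pi / N) / Real.sin (2 * n * Real.pi / N)) : ℝ)
      = (∑ j ∈ range (2*l-1), ∑ k ∈ range (2*l-1),
          Complex.exp (2 * Real.pi * Complex.I / N) ^ ((n : ℤ) * ((j:ℤ) + 2*k - 3*l + 3))).re := by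
  rw [Finset.mem_Icc] at hn
  have hNpos : (0:ℝ) < N := by positivity
  have hNne : (N:ℝ) ≠ 0 := ne_of_gt hNpos
  set m := 2*l - 1 with hm
  have hmr : (m : ℝ) = 2*l - 1 := by
    have : (1:ℕ) ≤ 2*l := by omega
    push_cast [hm, this]; ring
  have hmz : (m : ℤ) = 2*l - 1 := by
    have : (1:ℕ) ≤ 2*l := by omega
    push_cast [hm, this]; ring
  -- sin nonvanishing
  have hsin1 : Real.sin ((n:ℝ) * Real.pi / N) ≠ 0 := by
    apply ne_of_gt
    apply Real.sin_pos_of_pos_of_lt_pi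
    · have : (0:ℝ) < (n:ℝ) := by exact_mod_cast Nat.pos_of_ne_zero (by omega)
      positivity
    · rw [div_lt_iff₀ hNpos]
      have hnN : (n:ℝ) < N := by exact_mod_cast (by omega : n < N)
      nlinarith [Real.pi_pos]
  have hsin2 : Real.sin (2 * (n:ℝ) * Real.pi / N) ≠ 0 := by
    intro hzero
    rw [Real.sin_eq_zero_iff] at hzero
    obtain ⟨z, hz⟩ := hzero
    have h2n : (2 * n : ℤ) = z * N := by
      have : (2 * (n:ℝ) : ℝ) = z * N := by
        field_simp at hz
        nlinarith [Real.pi_pos, hz]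
      exact_mod_cast this
    have hz1 : z = 1 := by
      have h1 : (0:ℤ) < z * N := by
        rw [← h2n]; exact_mod_cast (by omega : 0 < 2*n)
      have h2 : z * N < 2 * N := by
        rw [← h2n]; exact_mod_cast (by omega : 2*n < 2*N)
      have hNz : (0:ℤ) < N := by exact_mod_cast (by omega : 0 < N)
      nlinarith
    obtain ⟨s, hs⟩ := hNodd
    rw [hz1, one_mul] at h2n
    omega
  -- rewrite the first sine quotient
  have harg1 : (n:ℝ) * (2 * l - 1 : ℝ) * Real.pi / N = (m:ℝ) * ((n:ℝ) * Real.pi / N) := by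
    rw [hmr]; ring
  have harg2 : 2 * (n:ℝ) * (2 * l - 1 : ℝ) * Real.pi / N = (m:ℝ) * (2 * (n:ℝ) * Real.pi / N) := by
    rw [hmr]; ring
  rw [harg1, harg2]
  have e1 := dirichlet_kernel ((n:ℝ) * Real.pi / N) hsin1 m
  have e2 := dirichlet_kernel (2 * (n:ℝ) * Real.pi / N) hsin2 m
  set x := Complex.exp (((n:ℝ) * Real.pi / N : ℝ) * Complex.I) with hx
  have hxne : x ≠ 0 := Complex.exp_ne_zero _
  set ω := Complex.exp (2 * Real.pi * Complex.I / N) with hω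
  have hx2 : Complex.exp ((2 * (n:ℝ) * Real.pi / N : ℝ) * Complex.I) = x ^ 2 := by
    rw [hx, ← Complex.exp_nat_mul]
    congr 1
    push_cast
    ring
  have hxω : x ^ 2 = ω ^ n := by
    rw [hx, hω, ← Complex.exp_nat_mul, ← Complex.exp_nat_mul]
    congr 1
    push_cast
    field_simp
  have key : ((Real.sin ((m:ℝ) * ((n:ℝ) * Real.pi / N)) / Real.sin ((n:ℝ) * Real.pi / N)) *
        (Real.sin ((m:ℝ) * (2 * (n:ℝ) * Real.pi / N)) / Real.sin (2 * (n:ℝ) * Real.pi / N)) : ℝ)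
      = ((∑ j ∈ range m, ∑ k ∈ range m,
          ω ^ ((n : ℤ) * ((j:ℤ) + 2*k - 3*l + 3))) : ℂ).re := by
    rw [← Complex.ofReal_re ((Real.sin ((m:ℝ) * ((n:ℝ) * Real.pi / N)) / Real.sin ((n:ℝ) * Real.pi / N)) *
        (Real.sin ((m:ℝ) * (2 * (n:ℝ) * Real.pi / N)) / Real.sin (2 * (n:ℝ) * Real.pi / N)) : ℝ)]
    congr 1
    rw [Complex.ofReal_mul, e1, e2, hx2, hxω, Finset.sum_mul_sum]
    apply Finset.sum_congr rfl
    intro j _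
    apply Finset.sum_congr rfl
    intro k _
    -- x ^ (2j - m + 1) * (ω^n) ^ (2k - m + 1) = ω ^ (n * (j + 2k - 3l + 3))
    have hj : (2 * (j:ℤ) - m + 1) = 2 * ((j:ℤ) - l + 1) := by rw [hmz]; ring
    rw [hj, zpow_mul, show (x:ℂ)^(2:ℤ) = x^(2:ℕ) by norm_cast, hxω]
    rw [← zpow_natCast ω n, ← zpow_mul, ← zpow_mul, ← zpow_add₀ (Complex.exp_ne_zero _)]
    congr 1
    rw [hmz]
    ring
  exact key

theorem aggregate (N l : ℕ) (hN : 3 ≤ N) (hNodd : Odd N) (hl1 : 1 ≤ l) (hl2 : l ≤ (N+1)/2) :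
    ∑ n ∈ Finset.Icc 1 (N-1), ∑ j ∈ range (2*l-1), ∑ k ∈ range (2*l-1),
        Complex.exp (2 * Real.pi * Complex.I / N) ^ ((n:ℤ) * ((j:ℤ) + 2*k - 3*l + 3))
    = (N:ℂ) * (((filter (fun k => 2*k+3 ≤ 3*l ∧ 3*l - (2*k+3) < 2*l-1) (range (2*l-1))).card : ℂ)
        + ((filter (fun k => 2*k+3 ≤ 3*l+N ∧ 3*l+N - (2*k+3) < 2*l-1) (range (2*l-1))).card : ℂ)
        + ((filter (fun k => 2*k+3 ≤ 3*l-N ∧ 3*l-N - (2*k+3) < 2*l-1) (range (2*l-1))).card : ℂ))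
      - ((2*l-1 : ℕ):ℂ)^2 := by
  have hNne : N ≠ 0 := by omega
  set ω := Complex.exp (2 * Real.pi * Complex.I / N) with hω
  set m := 2*l - 1 with hm
  set c : ℕ → ℕ → ℤ := fun j k => (j:ℤ) + 2*k - 3*l + 3 with hc
  have h0 : range N = insert 0 (Finset.Icc 1 (N-1)) := by
    ext t; simp only [Finset.mem_range, Finset.mem_insert, Finset.mem_Icc]; omega
  have hsplit : ∑ n ∈ range N, ∑ j ∈ range m, ∑ k ∈ range m, ω ^ ((n:ℤ) * c j k)
      = (∑ j ∈ range m, ∑ k ∈ range m, ω ^ ((0:ℤ) * c j k))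
        + ∑ n ∈ Finset.Icc 1 (N-1), ∑ j ∈ range m, ∑ k ∈ range m, ω ^ ((n:ℤ) * c j k) := by
    rw [h0, Finset.sum_insert (by simp)]
    norm_num
  have hzero : (∑ j ∈ range m, ∑ k ∈ range m, ω ^ ((0:ℤ) * c j k)) = ((m:ℕ):ℂ)^2 := by
    simp only [zero_mul, zpow_zero]
    simp [Finset.card_range, sq]
  have hswap : ∑ n ∈ range N, ∑ j ∈ range m, ∑ k ∈ range m, ω ^ ((n:ℤ) * c j k)
      = ∑ j ∈ range m, ∑ k ∈ range m, (if (N:ℤ) ∣ c j k then (N:ℂ) else 0) := by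
    rw [Finset.sum_comm]
    apply Finset.sum_congr rfl
    intro j _
    rw [Finset.sum_comm]
    apply Finset.sum_congr rfl
    intro k _
    exact root_sum N hNne (c j k)
  have hifs : ∀ j ∈ range m, ∀ k ∈ range m,
      (if (N:ℤ) ∣ c j k then (N:ℂ) else 0)
        = (N:ℂ) * ((if j + 2*k + 3 = 3*l then (1:ℂ) else 0)
            + (if j + 2*k + 3 = 3*l+N then (1:ℂ) else 0)
            + (if j + 2*k + 3 = 3*l-N then (1:ℂ) else 0)) := by
    intro j hj k hk
    rw [Finset.mem_range] at hj hk
    have hiff : (N:ℤ) ∣ c j k ↔ (j + 2*k + 3 = 3*l ∨ j + 2*k + 3 = 3*l+N ∨ j + 2*k + 3 = 3*l-N) := by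
      constructor
      · rintro ⟨d, hd⟩
        rw [hc] at hd
        simp only at hd
        have hNz : (3:ℤ) ≤ N := by exact_mod_cast hN
        have hub : (j:ℤ) + 2*k - 3*l + 3 ≤ 3*(l:ℤ) - 3 := by push_cast; omega
        have hlb : -(2*(N:ℤ)) < (j:ℤ) + 2*k - 3*l + 3 := by push_cast; omega
        have hub2 : 3*(l:ℤ) - 3 < 2*(N:ℤ) := by push_cast; omega
        have hd2 : d < 2 := by nlinarith
        have hdm2 : -2 < d := by nlinarith
        interval_cases d <;> omega
      · rintro (h | h | h)
        · exact ⟨0, by rw [hc]; simp only; omega⟩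
        · exact ⟨1, by rw [hc]; simp only; omega⟩
        · exact ⟨-1, by rw [hc]; simp only; omega⟩
    rw [if_congr hiff rfl rfl]
    by_cases h0' : j + 2*k + 3 = 3*l <;> by_cases h1 : j + 2*k + 3 = 3*l+N <;>
      by_cases h2 : j + 2*k + 3 = 3*l-N <;>
      simp only [h0', h1, h2, if_true, if_false, true_or, or_true, false_or, or_false]
    all_goals try (exfalso; omega)
    all_goals try norm_num
    all_goals split_ifs <;> first | (exfalso; omega) | norm_num
  -- combine
  have lhs_eq : ∑ n ∈ Finset.Icc 1 (N-1), ∑ j ∈ range m, ∑ k ∈ range m, ω ^ ((n:ℤ) * c j k)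
      = ∑ j ∈ range m, ∑ k ∈ range m, (if (N:ℤ) ∣ c j k then (N:ℂ) else 0) - ((m:ℕ):ℂ)^2 := by
    rw [← hswap]
    rw [hsplit, hzero]
    ring
  rw [lhs_eq, Finset.sum_congr rfl (fun j hj => Finset.sum_congr rfl (fun k hk => hifs j hj k hk))]
  simp only [← Finset.mul_sum, Finset.sum_add_distrib]
  rw [count_generic m (3*l), count_generic m (3*l+N), count_generic m (3*l-N)]

theorem re_eq (z : ℂ) (a : ℝ) (h : z = (a:ℂ)) : z.re = a := by
  rw [h, Complex.ofReal_re]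

end F1aux

set_option maxHeartbeats 1000000 in
theorem F1_sum_closed_form (N l : ℕ) (hN : 3 ≤ N) (hNodd : Odd N)
    (hl1 : 1 ≤ l) (hl2 : l ≤ (N + 1) / 2) :
    ∑ n ∈ Finset.Icc 1 (N - 1),
      (Real.sin (n * (2 * l - 1 : ℝ) * Real.pi / N) / Real.sin (n * Real.pi / N)) *
        (Real.sin (2 * n * (2 * l - 1 : ℝ) * Real.pi / N) / Real.sin (2 * n * Real.pi / N))
    = -(1 / 2) * (3 * (l : ℝ) - 2) * (3 * (l : ℝ) - 3)
      + (1 / 2) * ((l : ℝ) - 1) * ((l : ℝ) - 2)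
      - l
      + (1 / 2) * (1 - (-1 : ℝ) ^ l)
      + (((N : ℝ) - 1) / 2) * (2 * (l : ℝ) - 1 - (-1 : ℝ) ^ l)
      + (if 3 * l - 2 > N then
          (N : ℝ) * (3 * (l : ℝ) - 2 - N + (1 / 2) * (1 - (-1 : ℝ) ^ ((l : ℤ) - (N : ℤ))))
        else 0) := by
  rw [Finset.sum_congr rfl (fun n hn => F1aux.termwise N l hN hNodd hl1 n hn),
    ← Complex.re_sum, F1aux.aggregate N l hN hNodd hl1 hl2]
  obtain ⟨s, hs⟩ := hNodd
  subst hs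
  rcases Nat.even_or_odd l with hle | hlo
  · -- l even, l = 2t, t ≥ 1
    obtain ⟨t, ht⟩ := hle
    have ht2 : l = 2*t := by omega
    subst ht2
    have hA0 : (filter (fun k => 2*k+3 ≤ 3*(2*t) ∧ 3*(2*t) - (2*k+3) < 2*(2*t)-1)
        (range (2*(2*t)-1))).card = 2*t-1 := by
      have he : filter (fun k => 2*k+3 ≤ 3*(2*t) ∧ 3*(2*t) - (2*k+3) < 2*(2*t)-1)
          (range (2*(2*t)-1)) = Finset.Icc t (3*t-2) := by
        ext k
        simp only [Finset.mem_filter, Finset.mem_range, Finset.mem_Icc]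
        omega
      rw [he, Nat.card_Icc]
      omega
    have hA1 : (filter (fun k => 2*k+3 ≤ 3*(2*t)+(2*s+1) ∧ 3*(2*t)+(2*s+1) - (2*k+3) < 2*(2*t)-1)
        (range (2*(2*t)-1))).card = 3*t-s-1 := by
      have he : filter (fun k => 2*k+3 ≤ 3*(2*t)+(2*s+1) ∧ 3*(2*t)+(2*s+1) - (2*k+3) < 2*(2*t)-1)
          (range (2*(2*t)-1)) = Finset.Icc (t+s) (4*t-2) := by
        ext k
        simp only [Finset.mem_filter, Finset.mem_range, Finset.mem_Icc]
        omega
      rw [he, Nat.card_Icc]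
      omega
    have hA2 : (filter (fun k => 2*k+3 ≤ 3*(2*t)-(2*s+1) ∧ 3*(2*t)-(2*s+1) - (2*k+3) < 2*(2*t)-1)
        (range (2*(2*t)-1))).card = 3*t-s-1 := by
      have he : filter (fun k => 2*k+3 ≤ 3*(2*t)-(2*s+1) ∧ 3*(2*t)-(2*s+1) - (2*k+3) < 2*(2*t)-1)
          (range (2*(2*t)-1)) = Finset.range (3*t-s-1) := by
        ext k
        simp only [Finset.mem_filter, Finset.mem_range]
        omega
      rw [he, Finset.card_range]
    rw [hA0, hA1, hA2]
    have hp1 : ((-1:ℝ)) ^ (2*t) = 1 := by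
      rw [pow_mul]; norm_num
    have hpz : ((-1:ℝ)) ^ (((2*t:ℕ) : ℤ) - ((2*s+1:ℕ) : ℤ)) = -1 := by
      apply Odd.neg_one_zpow
      refine ⟨(t:ℤ) - s - 1, by push_cast; ring⟩
    rw [hp1, hpz]
    by_cases h3 : 3 * (2*t) - 2 > 2*s+1
    · rw [if_pos h3]
      apply F1aux.re_eq
      have e1 : ((2*t-1 : ℕ) : ℂ) = 2*(t:ℂ)-1 := by
        push_cast [Nat.cast_sub (show 1 ≤ 2*t by omega)]; ring
      have e2 : ((3*t-s-1 : ℕ) : ℂ) = 3*(t:ℂ)-s-1 := by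
        push_cast [Nat.sub_sub, Nat.cast_sub (show s+1 ≤ 3*t by omega)]; ring
      have e3 : ((2*(2*t)-1 : ℕ) : ℂ) = 4*(t:ℂ)-1 := by
        push_cast [Nat.cast_sub (show 1 ≤ 2*(2*t) by omega)]; ring
      rw [e1, e2, e3]
      have e4 : ((3*(2*t)-2 : ℕ) : ℝ) = 6*(t:ℝ)-2 := by
        push_cast [Nat.cast_sub (show 2 ≤ 3*(2*t) by omega)]; ring
      push_cast [e4]
      ring
    · rw [if_neg h3]
      have hz : 3*t-s-1 = 0 := by omega
      rw [hz]
      apply F1aux.re_eq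
      have e1 : ((2*t-1 : ℕ) : ℂ) = 2*(t:ℂ)-1 := by
        push_cast [Nat.cast_sub (show 1 ≤ 2*t by omega)]; ring
      have e3 : ((2*(2*t)-1 : ℕ) : ℂ) = 4*(t:ℂ)-1 := by
        push_cast [Nat.cast_sub (show 1 ≤ 2*(2*t) by omega)]; ring
      rw [e1, e3]
      push_cast
      ring
  · -- l odd, l = 2t+1
    obtain ⟨t, ht⟩ := hlo
    subst ht
    have hA0 : (filter (fun k => 2*k+3 ≤ 3*(2*t+1) ∧ 3*(2*t+1) - (2*k+3) < 2*(2*t+1)-1)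
        (range (2*(2*t+1)-1))).card = 2*t+1 := by
      have he : filter (fun k => 2*k+3 ≤ 3*(2*t+1) ∧ 3*(2*t+1) - (2*k+3) < 2*(2*t+1)-1)
          (range (2*(2*t+1)-1)) = Finset.Icc t (3*t) := by
        ext k
        simp only [Finset.mem_filter, Finset.mem_range, Finset.mem_Icc]
        omega
      rw [he, Nat.card_Icc]
      omega
    have hA1 : (filter (fun k => 2*k+3 ≤ 3*(2*t+1)+(2*s+1) ∧ 3*(2*t+1)+(2*s+1) - (2*k+3) < 2*(2*t+1)-1)
        (range (2*(2*t+1)-1))).card = 3*t-s := by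
      have he : filter (fun k => 2*k+3 ≤ 3*(2*t+1)+(2*s+1) ∧ 3*(2*t+1)+(2*s+1) - (2*k+3) < 2*(2*t+1)-1)
          (range (2*(2*t+1)-1)) = Finset.Icc (t+s+1) (4*t) := by
        ext k
        simp only [Finset.mem_filter, Finset.mem_range, Finset.mem_Icc]
        omega
      rw [he, Nat.card_Icc]
      omega
    have hA2 : (filter (fun k => 2*k+3 ≤ 3*(2*t+1)-(2*s+1) ∧ 3*(2*t+1)-(2*s+1) - (2*k+3) < 2*(2*t+1)-1)
        (range (2*(2*t+1)-1))).card = 3*t-s := by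
      have he : filter (fun k => 2*k+3 ≤ 3*(2*t+1)-(2*s+1) ∧ 3*(2*t+1)-(2*s+1) - (2*k+3) < 2*(2*t+1)-1)
          (range (2*(2*t+1)-1)) = Finset.range (3*t-s) := by
        ext k
        simp only [Finset.mem_filter, Finset.mem_range]
        omega
      rw [he, Finset.card_range]
    rw [hA0, hA1, hA2]
    have hp1 : ((-1:ℝ)) ^ (2*t+1) = -1 := Odd.neg_one_pow ⟨t, by ring⟩
    have hpz : ((-1:ℝ)) ^ (((2*t+1:ℕ) : ℤ) - ((2*s+1:ℕ) : ℤ)) = 1 := by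
      have hexp : (((2*t+1:ℕ) : ℤ) - ((2*s+1:ℕ) : ℤ)) = 2*((t:ℤ)-s) := by push_cast; ring
      rw [hexp, zpow_mul]
      norm_num
    rw [hp1, hpz]
    by_cases h3 : 3 * (2*t+1) - 2 > 2*s+1
    · rw [if_pos h3]
      apply F1aux.re_eq
      have e2 : ((3*t-s : ℕ) : ℂ) = 3*(t:ℂ)-s := by
        push_cast [Nat.cast_sub (show s ≤ 3*t by omega)]; ring
      have e3 : ((2*(2*t+1)-1 : ℕ) : ℂ) = 4*(t:ℂ)+1 := by
        push_cast [Nat.cast_sub (show 1 ≤ 2*(2*t+1) by omega)]; ring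
      rw [e2, e3]
      have e4 : ((3*(2*t+1)-2 : ℕ) : ℝ) = 6*(t:ℝ)+1 := by
        push_cast [Nat.cast_sub (show 2 ≤ 3*(2*t+1) by omega)]; ring
      push_cast [e4]
      ring
    · rw [if_neg h3]
      have hz : 3*t-s = 0 := by omega
      rw [hz]
      apply F1aux.re_eq
      have e3 : ((2*(2*t+1)-1 : ℕ) : ℂ) = 4*(t:ℂ)+1 := by
        push_cast [Nat.cast_sub (show 1 ≤ 2*(2*t+1) by omega)]; ring
      rw [e3]
      push_cast
      ring
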